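/- Let T' be a tree with diameter at least 3 satisfying γ_{t,coi}(T') = |V(T')| - β(T'), and let v be a vertex of T' belonging to some minimum total co-independent dominating set of T'. Let T be obtained from T' by adding a path h₁u₁u₂h₂ on four new vertices and the edge vh₁. Then γ_{t,coi}(T) = |V(T)| - β(T). -/

import Mathlib

open scoped Classical

/-- A set `D` is a total co-independent dominating set of `G`:
it is a total dominating set and its complement is a nonempty independent set. -/
def TotalCoIndep {V : Type*} [Fintype V] (G : SimpleGraph V) (D : Finset V) : Prop :=
  (∀ v : V, ∃ u ∈ D, G.Adj v u) ∧
  (Dᶜ : Finset V).Nonempty ∧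
  ∀ u ∈ (Dᶜ : Finset V), ∀ w ∈ (Dᶜ : Finset V), ¬ G.Adj u w

/-- The total co-independent domination number. -/
noncomputable def gammaTcoi {V : Type*} [Fintype V] (G : SimpleGraph V) : ℕ :=
  sInf {k | ∃ D : Finset V, TotalCoIndep G D ∧ D.card = k}

/-- A finite set of vertices is independent. -/
def IsIndepF {V : Type*} (G : SimpleGraph V) (B : Finset V) : Prop :=
  ∀ u ∈ B, ∀ w ∈ B, ¬ G.Adj u w

/-- The independence number. -/
noncomputable def indepNum {V : Type*} [Fintype V] (G : SimpleGraph V) : ℕ :=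
  sSup {k | ∃ B : Finset V, IsIndepF G B ∧ B.card = k}

/-- A leaf: a vertex with exactly one neighbor (degree one). -/
def IsLeaf {V : Type*} (G : SimpleGraph V) (v : V) : Prop :=
  ∃! u, G.Adj v u

/-- The set of leaves. -/
noncomputable def leaves {V : Type*} [Fintype V] (G : SimpleGraph V) : Finset V :=
  Finset.univ.filter (fun v => IsLeaf G v)

/-- A support vertex: a non-leaf adjacent to a leaf. -/
def IsSupport {V : Type*} (G : SimpleGraph V) (v : V) : Prop :=
  ¬ IsLeaf G v ∧ ∃ u, G.Adj v u ∧ IsLeaf G u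

/-- A semi-support vertex: a non-leaf, non-support vertex adjacent to a support vertex. -/
def IsSemiSupport {V : Type*} (G : SimpleGraph V) (v : V) : Prop :=
  ¬ IsLeaf G v ∧ ¬ IsSupport G v ∧ ∃ u, G.Adj v u ∧ IsSupport G u

/-- An isolated support vertex: a support vertex with no support vertex as neighbor. -/
def IsIsolatedSupport {V : Type*} (G : SimpleGraph V) (v : V) : Prop :=
  IsSupport G v ∧ ∀ u, G.Adj v u → ¬ IsSupport G u


section Aux
open Finset

lemma card_le_indepNum {V : Type*} [Fintype V] (G : SimpleGraph V) (B : Finset V)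
    (h : IsIndepF G B) : B.card ≤ indepNum G := by
  apply le_csSup
  · exact ⟨Fintype.card V, by rintro k ⟨B, -, rfl⟩; exact B.card_le_univ⟩
  · exact ⟨B, h, rfl⟩

lemma indepNum_le {V : Type*} [Fintype V] (G : SimpleGraph V) (m : ℕ)
    (h : ∀ B : Finset V, IsIndepF G B → B.card ≤ m) : indepNum G ≤ m := by
  have h0 : (0:ℕ) ∈ {k | ∃ B : Finset V, IsIndepF G B ∧ B.card = k} :=
    ⟨∅, by intro u hu; simp at hu, rfl⟩
  apply csSup_le ⟨0, h0⟩
  rintro k ⟨B, hB, rfl⟩; exact h B hB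

lemma fin4card (S : Finset (Fin 4)) (h01 : ¬(0 ∈ S ∧ 1 ∈ S)) (h12 : ¬(1 ∈ S ∧ 2 ∈ S))
    (h23 : ¬(2 ∈ S ∧ 3 ∈ S)) : S.card ≤ 2 := by
  revert h01 h12 h23; revert S; decide

lemma gammaTcoi_le {V : Type*} [Fintype V] (G : SimpleGraph V) (D : Finset V)
    (hD : TotalCoIndep G D) : gammaTcoi G ≤ D.card :=
  Nat.sInf_le ⟨D, hD, rfl⟩

lemma gammaTcoi_ge {V : Type*} [Fintype V] (G : SimpleGraph V) (D : Finset V)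
    (hD : TotalCoIndep G D) : Fintype.card V - indepNum G ≤ gammaTcoi G := by
  have hne : {k | ∃ D : Finset V, TotalCoIndep G D ∧ D.card = k}.Nonempty :=
    ⟨D.card, D, hD, rfl⟩
  have hmem : gammaTcoi G ∈ {k | ∃ D : Finset V, TotalCoIndep G D ∧ D.card = k} :=
    Nat.sInf_mem hne
  obtain ⟨D₀, hD₀, hc⟩ := hmem
  have h1 : (D₀ᶜ : Finset V).card ≤ indepNum G := card_le_indepNum G _ hD₀.2.2
  have h2 : (D₀ᶜ : Finset V).card = Fintype.card V - D₀.card := Finset.card_compl _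
  have h3 : D₀.card ≤ Fintype.card V := D₀.card_le_univ
  omega

end Aux

/-- Operation O₃: attaching a path `h₁u₁u₂h₂` by joining a vertex `v` of some minimum total
co-independent dominating set to the leaf `h₁` preserves `γ_{t,coi} = n - β`.
Here `h₁,u₁,u₂,h₂` are `Sum.inr 0, 1, 2, 3`. -/
theorem stmt10 {V' : Type*} [Fintype V'] (T' : SimpleGraph V') (hT' : T'.IsTree)
    (hdiam : ∃ x y : V', 3 ≤ T'.dist x y)
    (hval : gammaTcoi T' = Fintype.card V' - indepNum T')
    (v : V') (hv : ∃ D : Finset V', TotalCoIndep T' D ∧ D.card = gammaTcoi T' ∧ v ∈ D)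
    (T : SimpleGraph (V' ⊕ Fin 4))
    (hT : ∀ x y : V' ⊕ Fin 4, T.Adj x y ↔
      (∃ a b : V', x = Sum.inl a ∧ y = Sum.inl b ∧ T'.Adj a b) ∨
      (x = Sum.inl v ∧ y = Sum.inr 0) ∨ (x = Sum.inr 0 ∧ y = Sum.inl v) ∨
      (x = Sum.inr 0 ∧ y = Sum.inr 1) ∨ (x = Sum.inr 1 ∧ y = Sum.inr 0) ∨
      (x = Sum.inr 1 ∧ y = Sum.inr 2) ∨ (x = Sum.inr 2 ∧ y = Sum.inr 1) ∨
      (x = Sum.inr 2 ∧ y = Sum.inr 3) ∨ (x = Sum.inr 3 ∧ y = Sum.inr 2)) :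
    gammaTcoi T = Fintype.card (V' ⊕ Fin 4) - indepNum T := by

  classical
  obtain ⟨D', hD', hDcard, hvD⟩ := hv
  set n' := Fintype.card V' with hn'
  have hcardT : Fintype.card (V' ⊕ Fin 4) = n' + 4 := by
    simp [Fintype.card_sum]
    convert hn'.symm
  set f : V' ↪ (V' ⊕ Fin 4) := ⟨Sum.inl, Sum.inl_injective⟩ with hf
  set D : Finset (V' ⊕ Fin 4) := D'.map f ∪ {Sum.inr 1, Sum.inr 2} with hD
  have hmemD : ∀ x, x ∈ D ↔ (∃ a ∈ D', x = Sum.inl a) ∨ x = Sum.inr 1 ∨ x = Sum.inr 2 := by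
    intro x
    simp only [hD, Finset.mem_union, Finset.mem_map, Finset.mem_insert, Finset.mem_singleton, hf,
      Function.Embedding.coeFn_mk]
    constructor
    · rintro ((⟨a, ha, rfl⟩) | h) 
      · exact Or.inl ⟨a, ha, rfl⟩
      · exact Or.inr h
    · rintro ((⟨a, ha, rfl⟩) | h)
      · exact Or.inl ⟨a, ha, rfl⟩
      · exact Or.inr h
  -- D is a total co-independent dominating set of T
  have hTC : TotalCoIndep T D := by
    refine ⟨?_, ?_, ?_⟩
    · intro x
      rcases x with a | i
      · obtain ⟨u, hu, hadj⟩ := hD'.1 a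
        refine ⟨Sum.inl u, (hmemD _).2 (Or.inl ⟨u, hu, rfl⟩), ?_⟩
        exact (hT _ _).2 (Or.inl ⟨a, u, rfl, rfl, hadj⟩)
      · fin_cases i
        · exact ⟨Sum.inr 1, (hmemD _).2 (Or.inr (Or.inl rfl)), by rw [hT]; simp⟩
        · exact ⟨Sum.inr 2, (hmemD _).2 (Or.inr (Or.inr rfl)), by rw [hT]; simp⟩
        · exact ⟨Sum.inr 1, (hmemD _).2 (Or.inr (Or.inl rfl)), by rw [hT]; simp⟩
        · exact ⟨Sum.inr 2, (hmemD _).2 (Or.inr (Or.inr rfl)), by rw [hT]; simp⟩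
    · refine ⟨Sum.inr 3, ?_⟩
      simp only [Finset.mem_compl]
      intro h
      rcases (hmemD _).1 h with ⟨a, -, h⟩ | h | h <;> simp at h
    · intro x hx y hy hadj
      simp only [Finset.mem_compl] at hx hy
      rcases (hT _ _).1 hadj with ⟨a, b, rfl, rfl, hab⟩ | ⟨rfl, rfl⟩ | ⟨rfl, rfl⟩ |
        ⟨rfl, rfl⟩ | ⟨rfl, rfl⟩ | ⟨rfl, rfl⟩ | ⟨rfl, rfl⟩ | ⟨rfl, rfl⟩ | ⟨rfl, rfl⟩
      · have ha : a ∉ D' := fun h => hx ((hmemD _).2 (Or.inl ⟨a, h, rfl⟩))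
        have hb : b ∉ D' := fun h => hy ((hmemD _).2 (Or.inl ⟨b, h, rfl⟩))
        refine hD'.2.2 a ?_ b ?_ hab <;> simp only [Finset.mem_compl] <;> assumption
      · exact hx ((hmemD _).2 (Or.inl ⟨v, hvD, rfl⟩))
      · exact hy ((hmemD _).2 (Or.inl ⟨v, hvD, rfl⟩))
      · exact hy ((hmemD _).2 (Or.inr (Or.inl rfl)))
      · exact hx ((hmemD _).2 (Or.inr (Or.inl rfl)))
      · exact hx ((hmemD _).2 (Or.inr (Or.inl rfl)))
      · exact hy ((hmemD _).2 (Or.inr (Or.inl rfl)))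
      · exact hx ((hmemD _).2 (Or.inr (Or.inr rfl)))
      · exact hy ((hmemD _).2 (Or.inr (Or.inr rfl)))
  -- card of D
  have hcardD : D.card = D'.card + 2 := by
    have hdisj : Disjoint (D'.map f) ({Sum.inr 1, Sum.inr 2} : Finset (V' ⊕ Fin 4)) := by
      rw [Finset.disjoint_left]
      rintro x hx hx2
      obtain ⟨a, -, rfl⟩ := Finset.mem_map.1 hx
      simp [hf] at hx2
    rw [hD, Finset.card_union_of_disjoint hdisj, Finset.card_map]
    congr 1
  -- independence number bound
  have hβ'le : indepNum T' ≤ n' := indepNum_le _ _ (fun B _ => B.card_le_univ)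
  have hβT : indepNum T ≤ indepNum T' + 2 := by
    apply indepNum_le
    intro B hB
    set B' : Finset V' := Finset.univ.filter (fun a => Sum.inl a ∈ B) with hB'def
    set S : Finset (Fin 4) := Finset.univ.filter (fun i => Sum.inr i ∈ B) with hSdef
    have hB'indep : IsIndepF T' B' := by
      intro a ha b hb hab
      rw [hB'def, Finset.mem_filter] at ha hb
      exact hB _ ha.2 _ hb.2 ((hT _ _).2 (Or.inl ⟨a, b, rfl, rfl, hab⟩))
    have hSmem : ∀ i, i ∈ S ↔ Sum.inr i ∈ B := by
      intro i; rw [hSdef, Finset.mem_filter]; simp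
    have hS2 : S.card ≤ 2 := by
      refine fin4card S ?_ ?_ ?_
      · rintro ⟨h0, h1⟩
        exact hB _ ((hSmem 0).1 h0) _ ((hSmem 1).1 h1) (by rw [hT]; simp)
      · rintro ⟨h1, h2⟩
        exact hB _ ((hSmem 1).1 h1) _ ((hSmem 2).1 h2) (by rw [hT]; simp)
      · rintro ⟨h2, h3⟩
        exact hB _ ((hSmem 2).1 h2) _ ((hSmem 3).1 h3) (by rw [hT]; simp)
    have hBeq : B = B'.map f ∪ S.map ⟨Sum.inr, Sum.inr_injective⟩ := by
      ext x
      rcases x with a | i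
      · simp [hB'def, hf]
      · simp [hSdef, hf]
    have hdisj2 : Disjoint (B'.map f) (S.map ⟨Sum.inr, Sum.inr_injective⟩) := by
      rw [Finset.disjoint_left]
      rintro x hx hx2
      obtain ⟨a, -, rfl⟩ := Finset.mem_map.1 hx
      obtain ⟨i, -, hi⟩ := Finset.mem_map.1 hx2
      simp [hf] at hi
    have hcardB : B.card = B'.card + S.card := by
      rw [hBeq, Finset.card_union_of_disjoint hdisj2, Finset.card_map, Finset.card_map]
    have := card_le_indepNum T' B' hB'indep
    omega
  -- upper bound for gammaTcoi T
  have hup : gammaTcoi T ≤ D'.card + 2 := hcardD ▸ gammaTcoi_le T D hTC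
  -- lower bound
  have hlow : Fintype.card (V' ⊕ Fin 4) - indepNum T ≤ gammaTcoi T := gammaTcoi_ge T D hTC
  -- indepNum T vs gammaTcoi: conclude
  rw [hcardT] at hlow ⊢
  omega
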